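/- Fix an integer κ ≥ 3, let (X_t)_{t≥0} be a κ-color FCA trajectory on ℤ, and suppose no edge flips at any time t ≥ t_0, where t_0 ≥ 0. Then for every t ≥ t_0 and x ∈ ℤ: rk_{t+1}(x) = rk_t(x) + 1 if there exists y ∈ {x−1, x+1} with X_t(y) = b(κ) and rk_t(y) > rk_t(x), and rk_{t+1}(x) = rk_t(x) otherwise. -/

import Mathlib

noncomputable section

namespace FCA

/-- The blinking color `b(κ) = ⌊(κ-1)/2⌋`. -/
def blink (κ : ℕ) : ℕ := (κ - 1) / 2

/-- One step of the κ-color firefly cellular automaton on ℤ. -/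
def step (κ : ℕ) (X : ℤ → ZMod κ) : ℤ → ZMod κ := fun x =>
  if (X x).val > blink κ ∧ ((X (x - 1)).val = blink κ ∨ (X (x + 1)).val = blink κ)
  then X x else X x + 1

/-- The FCA trajectory started from `X0`. -/
def traj (κ : ℕ) (X0 : ℤ → ZMod κ) : ℕ → ℤ → ZMod κ
  | 0 => X0
  | t + 1 => step κ (traj κ X0 t)

/-- Site `x` is excited at time `t`: `X_{t+1}(x) = X_t(x)`. -/
def excited (κ : ℕ) (X0 : ℤ → ZMod κ) (t : ℕ) (x : ℤ) : Prop :=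
  traj κ X0 (t + 1) x = traj κ X0 t x

/-- The number of excitations of site `x` before time `t`. -/
def ne' (κ : ℕ) (X0 : ℤ → ZMod κ) (t : ℕ) (x : ℤ) : ℕ :=
  ((Finset.range t).filter fun s => traj κ X0 (s + 1) x = traj κ X0 s x).card

/-- The associated 1-form on the oriented edge `(x, x+1)`. -/
def dform (κ : ℕ) (X : ℤ → ZMod κ) (x : ℤ) : ℤ :=
  let d : ℕ := (X (x + 1) - X x).val
  if 2 * d < κ then (d : ℤ)
  else if κ < 2 * d then (d : ℤ) - (κ : ℤ)
  else if (X x).val ≤ blink κ then ((κ / 2 : ℕ) : ℤ) else -((κ / 2 : ℕ) : ℤ)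

/-- The edge `(x, x+1)` flips at time `t`. -/
def flips (κ : ℕ) (X0 : ℤ → ZMod κ) (t : ℕ) (x : ℤ) : Prop :=
  (0 < dform κ (traj κ X0 t) x ∧ dform κ (traj κ X0 (t + 1)) x < 0) ∨
  (dform κ (traj κ X0 t) x < 0 ∧ 0 < dform κ (traj κ X0 (t + 1)) x)

/-- Path integral of an edge function: `∫_x^y f = Σ_{i=x}^{y-1} f(i)` for `x ≤ y`,
and `∫_y^x f = -∫_x^y f`. -/
def pathInt (f : ℤ → ℤ) (x y : ℤ) : ℤ :=
  if x ≤ y then ∑ i ∈ Finset.Ico x y, f i else -∑ i ∈ Finset.Ico y x, f i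

/-- The tournament expansion: `rk_t(0) = ne_t(0)` and `rk_t(x) = rk_t(0) - ∫_0^x dX_t`. -/
def rk (κ : ℕ) (X0 : ℤ → ZMod κ) (t : ℕ) (x : ℤ) : ℤ :=
  (ne' κ X0 t 0 : ℤ) - pathInt (dform κ (traj κ X0 t)) 0 x

/-- `M_t(r)`: the maximum rank at time `t` among sites `x` with `|x| ≤ r`. -/
def maxRk (κ : ℕ) (X0 : ℤ → ZMod κ) (t : ℕ) (r : ℝ) : ℤ :=
  sSup (rk κ X0 t '' {x : ℤ | |(x : ℝ)| ≤ r})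

end FCA

open FCA

section Aux

open Finset

lemma sum_Ico_succ_top_int (f : ℤ → ℤ) {a b : ℤ} (h : a ≤ b) :
    ∑ i ∈ Finset.Ico a (b + 1), f i = (∑ i ∈ Finset.Ico a b, f i) + f b := by
  have hu : Finset.Ico a b ∪ Finset.Ico b (b + 1) = Finset.Ico a (b + 1) :=
    Finset.Ico_union_Ico_eq_Ico h (by omega)
  have hd : Disjoint (Finset.Ico a b) (Finset.Ico b (b + 1)) :=
    Finset.Ico_disjoint_Ico_consecutive a b (b + 1)
  have hs : Finset.Ico b (b + 1) = {b} := by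
    ext i
    simp only [Finset.mem_Ico, Finset.mem_singleton]
    omega
  rw [← hu, Finset.sum_union hd, hs, Finset.sum_singleton]

lemma sum_Ico_succ_bot_int (f : ℤ → ℤ) {a b : ℤ} (h : a < b) :
    ∑ i ∈ Finset.Ico a b, f i = f a + ∑ i ∈ Finset.Ico (a + 1) b, f i := by
  have hu : Finset.Ico a (a + 1) ∪ Finset.Ico (a + 1) b = Finset.Ico a b :=
    Finset.Ico_union_Ico_eq_Ico (by omega) (by omega)
  have hd : Disjoint (Finset.Ico a (a + 1)) (Finset.Ico (a + 1) b) :=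
    Finset.Ico_disjoint_Ico_consecutive a (a + 1) b
  have hs : Finset.Ico a (a + 1) = {a} := by
    ext i
    simp only [Finset.mem_Ico, Finset.mem_singleton]
    omega
  rw [← hu, Finset.sum_union hd, hs, Finset.sum_singleton]

lemma pathInt_succ (f : ℤ → ℤ) (x : ℤ) : pathInt f 0 (x + 1) = pathInt f 0 x + f x := by
  rcases le_or_gt 0 x with h | h
  · unfold pathInt
    rw [if_pos (by omega), if_pos h, sum_Ico_succ_top_int f h]
  · have h1 : pathInt f 0 (x + 1) = -∑ i ∈ Finset.Ico (x + 1) 0, f i := by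
      unfold pathInt
      rcases eq_or_lt_of_le (show x + 1 ≤ 0 by omega) with h2 | h2
      · rw [h2]
        simp
      · rw [if_neg (by omega)]
    rw [h1]
    unfold pathInt
    rw [if_neg (by omega), sum_Ico_succ_bot_int f h]
    ring

lemma dform_def (κ : ℕ) (X : ℤ → ZMod κ) (x : ℤ) :
    dform κ X x = if 2 * (X (x + 1) - X x).val < κ then ((X (x + 1) - X x).val : ℤ)
      else if κ < 2 * (X (x + 1) - X x).val then ((X (x + 1) - X x).val : ℤ) - (κ : ℤ)
      else if (X x).val ≤ blink κ then ((κ / 2 : ℕ) : ℤ) else -((κ / 2 : ℕ) : ℤ) := rfl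

lemma dform_bound (κ : ℕ) (hκ : 3 ≤ κ) (X : ℤ → ZMod κ) (x : ℤ) :
    -(κ : ℤ) ≤ 2 * dform κ X x ∧ 2 * dform κ X x ≤ (κ : ℤ) := by
  haveI : NeZero κ := ⟨by omega⟩
  have hd : (X (x + 1) - X x).val < κ := ZMod.val_lt _
  rw [dform_def]
  split_ifs <;> constructor <;> push_cast <;> omega

lemma dform_cast (κ : ℕ) (hκ : 3 ≤ κ) (X : ℤ → ZMod κ) (x : ℤ) :
    ((dform κ X x : ℤ) : ZMod κ) = X (x + 1) - X x := by
  haveI : NeZero κ := ⟨by omega⟩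
  have hd : (X (x + 1) - X x).val < κ := ZMod.val_lt _
  have hval : (((X (x + 1) - X x).val : ℕ) : ZMod κ) = X (x + 1) - X x := by
    simp [ZMod.natCast_val, ZMod.cast_id]
  rw [dform_def]
  split_ifs with h1 h2 h3
  · push_cast
    exact hval
  · push_cast
    rw [ZMod.natCast_self, sub_zero]
    exact hval
  · have hdq : κ / 2 = (X (x + 1) - X x).val := by omega
    rw [hdq]
    push_cast
    exact hval
  · have h2d : 2 * (X (x + 1) - X x).val = κ := by omega
    have hdq : κ / 2 = (X (x + 1) - X x).val := by omega
    rw [hdq]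
    push_cast
    have hz : ((X (x + 1) - X x).val : ZMod κ) + ((X (x + 1) - X x).val : ZMod κ) = 0 := by
      rw [← Nat.cast_add, show (X (x + 1) - X x).val + (X (x + 1) - X x).val = κ by omega]
      exact ZMod.natCast_self κ
    conv_rhs => rw [← hval]
    exact neg_eq_of_add_eq_zero_left hz

lemma val_sub (κ : ℕ) (hκ : 3 ≤ κ) (u v : ZMod κ) :
    (u - v).val = if v.val ≤ u.val then u.val - v.val else u.val + κ - v.val := by
  haveI : NeZero κ := ⟨by omega⟩
  have hu : u.val < κ := ZMod.val_lt _
  have hv : v.val < κ := ZMod.val_lt _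
  have he : (if v.val ≤ u.val then u.val - v.val else u.val + κ - v.val) < κ := by
    split_ifs <;> omega
  have hcast : (((if v.val ≤ u.val then u.val - v.val else u.val + κ - v.val) : ℕ) : ZMod κ)
      = u - v := by
    split_ifs with h
    · rw [Nat.cast_sub h]
      simp [ZMod.natCast_val, ZMod.cast_id]
    · rw [show u.val + κ - v.val = u.val + (κ - v.val) by omega, Nat.cast_add,
        Nat.cast_sub (le_of_lt hv)]
      simp [ZMod.natCast_val, ZMod.cast_id, ZMod.natCast_self, sub_eq_add_neg]
  conv_lhs => rw [← hcast]
  exact ZMod.val_cast_of_lt he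

lemma dform_right_blink (κ : ℕ) (hκ : 3 ≤ κ) (X : ℤ → ZMod κ) (x : ℤ)
    (hb : (X (x + 1)).val = blink κ) :
    dform κ X x < 0 ↔ blink κ < (X x).val := by
  haveI : NeZero κ := ⟨by omega⟩
  have ha : (X x).val < κ := ZMod.val_lt _
  have hv := val_sub κ hκ (X (x + 1)) (X x)
  rw [hb] at hv
  rw [dform_def, hv]
  simp only [blink] at *
  split_ifs with hc <;> simp only [hc, if_true, if_false, not_false_eq_true] <;> split_ifs <;> push_cast <;> omega

lemma dform_left_blink (κ : ℕ) (hκ : 3 ≤ κ) (X : ℤ → ZMod κ) (x : ℤ)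
    (hb : (X x).val = blink κ) :
    0 < dform κ X x ↔ blink κ < (X (x + 1)).val := by
  haveI : NeZero κ := ⟨by omega⟩
  have ha : (X (x + 1)).val < κ := ZMod.val_lt _
  have hv := val_sub κ hκ (X (x + 1)) (X x)
  rw [hb] at hv
  rw [dform_def, hv, hb]
  simp only [blink] at *
  split_ifs with hc <;> simp only [hc, if_true, if_false, not_false_eq_true] <;> split_ifs <;> push_cast <;> omega

lemma traj_succ (κ : ℕ) (X0 : ℤ → ZMod κ) (t : ℕ) :
    traj κ X0 (t + 1) = step κ (traj κ X0 t) := rfl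

lemma traj_step_or (κ : ℕ) (X0 : ℤ → ZMod κ) (t : ℕ) (y : ℤ) :
    traj κ X0 (t + 1) y = traj κ X0 t y ∨ traj κ X0 (t + 1) y = traj κ X0 t y + 1 := by
  rw [traj_succ]
  simp only [step]
  split
  · exact Or.inl rfl
  · exact Or.inr rfl

lemma traj_cast (κ : ℕ) (hκ : 3 ≤ κ) (X0 : ℤ → ZMod κ) (t : ℕ) (y : ℤ) :
    traj κ X0 (t + 1) y = traj κ X0 t y
      + (((1 - (if traj κ X0 (t + 1) y = traj κ X0 t y then (1 : ℤ) else 0)) : ℤ) : ZMod κ) := by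
  by_cases h : traj κ X0 (t + 1) y = traj κ X0 t y
  · simp [h]
  · rw [if_neg h]
    rcases traj_step_or κ X0 t y with h' | h'
    · exact absurd h' h
    · rw [h']
      norm_num

lemma excited_iff (κ : ℕ) (hκ : 3 ≤ κ) (X0 : ℤ → ZMod κ) (t : ℕ) (x : ℤ) :
    traj κ X0 (t + 1) x = traj κ X0 t x ↔
      (blink κ < (traj κ X0 t x).val ∧
        ((traj κ X0 t (x - 1)).val = blink κ ∨ (traj κ X0 t (x + 1)).val = blink κ)) := by
  haveI : NeZero κ := ⟨by omega⟩
  rw [traj_succ]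
  simp only [step]
  split_ifs with h
  · exact iff_of_true rfl h
  · refine iff_of_false (fun heq => ?_) h
    haveI : Fact (1 < κ) := ⟨by omega⟩
    have h1 : (1 : ZMod κ) = 0 := by linear_combination heq
    exact one_ne_zero h1

lemma dform_step (κ : ℕ) (hκ : 3 ≤ κ) (X0 : ℤ → ZMod κ) (t : ℕ) (x : ℤ)
    (hnf : ¬ flips κ X0 t x) :
    dform κ (traj κ X0 (t + 1)) x = dform κ (traj κ X0 t) x
      + (if traj κ X0 (t + 1) x = traj κ X0 t x then (1 : ℤ) else 0)
      - (if traj κ X0 (t + 1) (x + 1) = traj κ X0 t (x + 1) then (1 : ℤ) else 0) := by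
  haveI : NeZero κ := ⟨by omega⟩
  simp only [flips, not_or] at hnf
  have hAc := dform_cast κ hκ (traj κ X0 (t + 1)) x
  have hBc := dform_cast κ hκ (traj κ X0 t) x
  have hAb := dform_bound κ hκ (traj κ X0 (t + 1)) x
  have hBb := dform_bound κ hκ (traj κ X0 t) x
  have h1 := traj_cast κ hκ X0 t x
  have h2 := traj_cast κ hκ X0 t (x + 1)
  have hκ' : (3 : ℤ) ≤ (κ : ℤ) := by exact_mod_cast hκ
  set A := dform κ (traj κ X0 (t + 1)) x with hA
  set B := dform κ (traj κ X0 t) x with hB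
  set cx := (if traj κ X0 (t + 1) x = traj κ X0 t x then (1 : ℤ) else 0) with hcx
  set cy := (if traj κ X0 (t + 1) (x + 1) = traj κ X0 t (x + 1) then (1 : ℤ) else 0) with hcy
  have hcx0 : 0 ≤ cx ∧ cx ≤ 1 := by rw [hcx]; split_ifs <;> norm_num
  have hcy0 : 0 ≤ cy ∧ cy ≤ 1 := by rw [hcy]; split_ifs <;> norm_num
  have key : ((A : ℤ) : ZMod κ) = ((B + cx - cy : ℤ) : ZMod κ) := by
    rw [hAc, h1, h2]
    push_cast
    rw [hBc]
    ring
  have hdvd : (κ : ℤ) ∣ (A - (B + cx - cy)) := by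
    rw [← ZMod.intCast_zmod_eq_zero_iff_dvd]
    push_cast at key ⊢
    rw [key]
    ring
  obtain ⟨q, hq⟩ := hdvd
  clear_value A B cx cy
  obtain ⟨hn1, hn2⟩ := hnf
  have hq1 : q ≤ 1 := by
    by_contra hcon
    push_neg at hcon
    have hm : (κ : ℤ) * 2 ≤ (κ : ℤ) * q := by
      apply mul_le_mul_of_nonneg_left (by omega) (by omega)
    linarith [hAb.1, hAb.2, hBb.1, hBb.2, hcx0.1, hcx0.2, hcy0.1, hcy0.2]
  have hq2 : -1 ≤ q := by
    by_contra hcon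
    push_neg at hcon
    have hm : (κ : ℤ) * q ≤ (κ : ℤ) * (-2) := by
      apply mul_le_mul_of_nonneg_left (by omega) (by omega)
    linarith [hAb.1, hAb.2, hBb.1, hBb.2, hcx0.1, hcx0.2, hcy0.1, hcy0.2]
  interval_cases q
  · exact absurd ⟨by omega, by omega⟩ hn1
  · omega
  · exact absurd ⟨by omega, by omega⟩ hn2

lemma ne'_succ (κ : ℕ) (X0 : ℤ → ZMod κ) (t : ℕ) (x : ℤ) :
    ne' κ X0 (t + 1) x = ne' κ X0 t x
      + (if traj κ X0 (t + 1) x = traj κ X0 t x then 1 else 0) := by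
  unfold ne'
  rw [Finset.range_add_one, Finset.filter_insert]
  split_ifs with h
  · rw [Finset.card_insert_of_notMem (by simp)]
  · simp

lemma rk_step (κ : ℕ) (hκ : 3 ≤ κ) (X0 : ℤ → ZMod κ) (t : ℕ)
    (hnf : ∀ x : ℤ, ¬ flips κ X0 t x) (x : ℤ) :
    rk κ X0 (t + 1) x = rk κ X0 t x
      + (if traj κ X0 (t + 1) x = traj κ X0 t x then (1 : ℤ) else 0) := by
  have hP : ∀ z : ℤ, pathInt (dform κ (traj κ X0 (t + 1))) 0 z
      = pathInt (dform κ (traj κ X0 t)) 0 z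
        + (if traj κ X0 (t + 1) 0 = traj κ X0 t 0 then (1 : ℤ) else 0)
        - (if traj κ X0 (t + 1) z = traj κ X0 t z then (1 : ℤ) else 0) := by
    intro z
    induction z using Int.induction_on with
    | zero => simp [pathInt]
    | succ i ih =>
        have h1 := pathInt_succ (dform κ (traj κ X0 (t + 1))) i
        have h2 := pathInt_succ (dform κ (traj κ X0 t)) i
        have h3 := dform_step κ hκ X0 t i (hnf i)
        linarith [h1, h2, h3, ih]
    | pred i ih =>
        have h1 := pathInt_succ (dform κ (traj κ X0 (t + 1))) (-(i : ℤ) - 1)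
        have h2 := pathInt_succ (dform κ (traj κ X0 t)) (-(i : ℤ) - 1)
        have h3 := dform_step κ hκ X0 t (-(i : ℤ) - 1) (hnf _)
        rw [show (-(i : ℤ) - 1) + 1 = -(i : ℤ) by ring] at h1 h2 h3
        linarith [h1, h2, h3, ih]
  have hne : (ne' κ X0 (t + 1) 0 : ℤ) = (ne' κ X0 t 0 : ℤ)
      + (if traj κ X0 (t + 1) 0 = traj κ X0 t 0 then (1 : ℤ) else 0) := by
    by_cases hc : traj κ X0 (t + 1) 0 = traj κ X0 t 0 <;> simp [ne'_succ, hc]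
  unfold rk
  rw [hP x, hne]
  ring

lemma rk_succ (κ : ℕ) (X0 : ℤ → ZMod κ) (t : ℕ) (x : ℤ) :
    rk κ X0 t (x + 1) = rk κ X0 t x - dform κ (traj κ X0 t) x := by
  unfold rk
  rw [pathInt_succ]
  ring

end Aux


/-- If no edge flips at any time `t ≥ t₀`, then the tournament expansion
evolves as a tournament process: `rk_{t+1}(x) = rk_t(x) + 1` if some neighbor `y` of `x`
blinks at time `t` and has higher rank, and `rk_{t+1}(x) = rk_t(x)` otherwise. -/
theorem fca_tournament_evolution (κ : ℕ) (hκ : 3 ≤ κ) (X0 : ℤ → ZMod κ) (t₀ : ℕ)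
    (hnoflip : ∀ t : ℕ, t₀ ≤ t → ∀ x : ℤ, ¬ flips κ X0 t x) :
    ∀ (t : ℕ), t₀ ≤ t → ∀ x : ℤ,
      ((∃ y : ℤ, (y = x - 1 ∨ y = x + 1) ∧ (traj κ X0 t y).val = blink κ ∧
          rk κ X0 t x < rk κ X0 t y) →
        rk κ X0 (t + 1) x = rk κ X0 t x + 1) ∧
      (¬ (∃ y : ℤ, (y = x - 1 ∨ y = x + 1) ∧ (traj κ X0 t y).val = blink κ ∧
          rk κ X0 t x < rk κ X0 t y) →
        rk κ X0 (t + 1) x = rk κ X0 t x) := by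
  intro t ht x
  haveI : NeZero κ := ⟨by omega⟩
  have hrk1 : rk κ X0 t (x + 1) = rk κ X0 t x - dform κ (traj κ X0 t) x := rk_succ κ X0 t x
  have hrk0 : rk κ X0 t x = rk κ X0 t (x - 1) - dform κ (traj κ X0 t) (x - 1) := by
    have h := rk_succ κ X0 t (x - 1)
    rwa [show x - 1 + 1 = x by ring] at h
  have hE : (∃ y : ℤ, (y = x - 1 ∨ y = x + 1) ∧ (traj κ X0 t y).val = blink κ ∧
      rk κ X0 t x < rk κ X0 t y) ↔ traj κ X0 (t + 1) x = traj κ X0 t x := by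
    rw [excited_iff κ hκ X0 t x]
    constructor
    · rintro ⟨y, hy | hy, hbv, hlt⟩
      · subst hy
        have hd : 0 < dform κ (traj κ X0 t) (x - 1) := by omega
        have h5 := (dform_left_blink κ hκ (traj κ X0 t) (x - 1) hbv).mp hd
        rw [show x - 1 + 1 = x by ring] at h5
        exact ⟨h5, Or.inl hbv⟩
      · subst hy
        have hd : dform κ (traj κ X0 t) x < 0 := by omega
        exact ⟨(dform_right_blink κ hκ (traj κ X0 t) x hbv).mp hd, Or.inr hbv⟩
    · rintro ⟨hgt, hbv | hbv⟩
      · refine ⟨x - 1, Or.inl rfl, hbv, ?_⟩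
        have h5 := (dform_left_blink κ hκ (traj κ X0 t) (x - 1) hbv).mpr
          (by rwa [show x - 1 + 1 = x by ring])
        omega
      · refine ⟨x + 1, Or.inr rfl, hbv, ?_⟩
        have h5 := (dform_right_blink κ hκ (traj κ X0 t) x hbv).mpr hgt
        omega
  have hstep := rk_step κ hκ X0 t (hnoflip t ht) x
  constructor
  · intro hEx
    rw [hstep, if_pos (hE.mp hEx)]
  · intro hEx
    rw [hstep, if_neg (fun h => hEx (hE.mpr h)), add_zero]
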